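/- For a complex number q with |q| > 1 and x with |x| < |q|, exp(∑_{l≥1} x^l/(l(1-q^l))) = ∏_{r≥0}(1 - q^{-r-1} x) = (q^{-1}x; q^{-1})_∞. -/

import Mathlib

set_option maxHeartbeats 2000000


/-- For `‖q‖ > 1` and `‖x‖ < ‖q‖`,
`exp(∑_{l≥1} x^l/(l(1-q^l))) = ∏_{r≥0}(1 - q^{-r-1} x) = (q⁻¹ x; q⁻¹)_∞`. -/
theorem stmt1 (q x : ℂ) (hq : 1 < ‖q‖) (hx : ‖x‖ < ‖q‖) :
    Complex.exp (∑' l : ℕ, x ^ (l + 1) / (((l : ℂ) + 1) * (1 - q ^ (l + 1)))) =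
      ∏' r : ℕ, (1 - q⁻¹ ^ (r + 1) * x) := by
  have hq0 : q ≠ 0 := by
    intro h; rw [h] at hq; simp at hq; linarith
  have hqinv : ‖q⁻¹‖ < 1 := by
    rw [norm_inv]
    exact inv_lt_one_of_one_lt₀ hq
  have hqinv0 : (0:ℝ) ≤ ‖q⁻¹‖ := norm_nonneg _
  -- norm of q⁻¹^(r+1) * x is < 1
  have hz : ∀ r : ℕ, ‖q⁻¹ ^ (r + 1) * x‖ < 1 := by
    intro r
    rw [norm_mul, norm_pow]
    calc ‖q⁻¹‖ ^ (r+1) * ‖x‖ ≤ ‖q⁻¹‖ * ‖x‖ := by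
          apply mul_le_mul_of_nonneg_right _ (norm_nonneg x)
          calc ‖q⁻¹‖ ^ (r+1) ≤ ‖q⁻¹‖ ^ 1 :=
                pow_le_pow_of_le_one hqinv0 hqinv.le (by omega)
            _ = ‖q⁻¹‖ := pow_one _
      _ < 1 := by
          rw [norm_inv]
          rw [inv_mul_lt_one₀ (by linarith)]
          simpa using hx
  -- factors nonzero
  have hfn : ∀ r : ℕ, (1 : ℂ) - q⁻¹ ^ (r + 1) * x ≠ 0 := by
    intro r h
    have h1 : q⁻¹ ^ (r+1) * x = 1 := by linear_combination -h
    have h2 := hz r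
    rw [h1] at h2
    simp at h2
  -- the double-indexed function
  set F : ℕ × ℕ → ℂ := fun p => -((q⁻¹ ^ (p.1 + 1) * x) ^ (p.2 + 1) / ((p.2 : ℂ) + 1)) with hF
  -- summability of F
  have hFsum : Summable F := by
    apply Summable.of_norm
    have hw : ‖q⁻¹ * x‖ < 1 := by simpa using hz 0
    have hg1 : Summable (fun r : ℕ => ‖q⁻¹‖ ^ r) :=
      summable_geometric_of_lt_one hqinv0 hqinv
    have hg2 : Summable (fun l : ℕ => ‖q⁻¹ * x‖ ^ (l + 1)) := by
      apply Summable.congr (((summable_geometric_of_lt_one (norm_nonneg _) hw)).mul_left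
        ‖q⁻¹ * x‖)
      intro l
      rw [← pow_succ']
    have hb : Summable (fun p : ℕ × ℕ => ‖q⁻¹‖ ^ p.1 * ‖q⁻¹ * x‖ ^ (p.2 + 1)) :=
      hg1.mul_of_nonneg hg2 (fun _ => by positivity) (fun _ => by positivity)
    apply hb.of_nonneg_of_le (fun _ => norm_nonneg _)
    rintro ⟨r, l⟩
    simp only [hF, norm_neg, norm_div, norm_pow, norm_mul]
    have h1 : (1:ℝ) ≤ ‖((l:ℂ) + 1)‖ := by
      have : ((l:ℂ) + 1) = ((l+1 : ℕ) : ℂ) := by push_cast; ring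
      rw [this, Complex.norm_natCast]
      exact_mod_cast Nat.one_le_iff_ne_zero.mpr (Nat.succ_ne_zero l)
    calc (‖q⁻¹‖ ^ (r+1) * ‖x‖) ^ (l+1) / ‖((l:ℂ)+1)‖
        ≤ (‖q⁻¹‖ ^ (r+1) * ‖x‖) ^ (l+1) / 1 := by
          apply div_le_div_of_nonneg_left _ one_pos h1
          · positivity
      _ = (‖q⁻¹‖ ^ r * (‖q⁻¹‖ * ‖x‖)) ^ (l+1) := by rw [div_one]; ring_nf
      _ ≤ ‖q⁻¹‖ ^ r * (‖q⁻¹‖ * ‖x‖) ^ (l+1) := by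
          rw [mul_pow]
          apply mul_le_mul_of_nonneg_right _ (by positivity)
          calc (‖q⁻¹‖ ^ r) ^ (l+1) ≤ (‖q⁻¹‖ ^ r) ^ 1 := by
                apply pow_le_pow_of_le_one (by positivity) _ (by omega)
                exact pow_le_one₀ hqinv0 hqinv.le
            _ = ‖q⁻¹‖ ^ r := pow_one _
  -- row sums: for each r, sum over l gives log
  have hrow : ∀ r : ℕ, HasSum (fun l => F (r, l)) (Complex.log (1 - q⁻¹ ^ (r + 1) * x)) := by
    intro r
    have h : HasSum (fun n : ℕ => (q⁻¹ ^ (r+1) * x) ^ n / (n : ℂ))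
        (-Complex.log (1 - q⁻¹ ^ (r + 1) * x)) :=
      Complex.hasSum_taylorSeries_neg_log (hz r)
    have h2 := (hasSum_nat_add_iff' 1).mpr h
    simp only [Finset.range_one, Finset.sum_singleton, Nat.cast_zero, div_zero, pow_zero,
      sub_zero] at h2
    have h3 := h2.neg
    rw [neg_neg] at h3
    have hfe : (fun l : ℕ => F (r, l))
        = fun b : ℕ => -((q⁻¹ ^ (r+1) * x) ^ (b+1) / (((b+1 : ℕ)) : ℂ)) := by
      funext l
      simp only [hF]
      norm_cast
    rw [hfe]
    exact h3
  -- column sums: for each l, sum over r gives the lhs term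
  have hcol : ∀ l : ℕ, HasSum (fun r => F (r, l))
      (x ^ (l + 1) / (((l : ℂ) + 1) * (1 - q ^ (l + 1)))) := by
    intro l
    have hy : ‖q⁻¹ ^ (l + 1)‖ < 1 := by
      rw [norm_pow]
      exact pow_lt_one₀ hqinv0 hqinv (Nat.succ_ne_zero l)
    have hgeom : HasSum (fun r : ℕ => (q⁻¹ ^ (l+1)) ^ r)
        (1 - q⁻¹ ^ (l+1))⁻¹ := hasSum_geometric_of_norm_lt_one hy
    have hqL : q ^ (l+1) ≠ 1 := by
      intro h
      have : ‖q ^ (l+1)‖ = 1 := by rw [h]; simp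
      rw [norm_pow] at this
      have : (1:ℝ) < ‖q‖ ^ (l+1) := one_lt_pow₀ hq (Nat.succ_ne_zero l)
      linarith
    have hqL0 : q ^ (l+1) ≠ 0 := pow_ne_zero _ hq0
    have hl1 : ((l:ℂ) + 1) ≠ 0 := by
      intro h
      have := congrArg Complex.re h
      push_cast at this
      simp at this
      linarith [Nat.cast_nonneg (α := ℝ) l]
    have h1y : (1:ℂ) - q⁻¹ ^ (l+1) ≠ 0 := by
      intro h
      have h2 : q⁻¹ ^ (l+1) = 1 := by linear_combination -h
      rw [h2] at hy
      simp at hy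
    have key : (fun r : ℕ => F (r, l))
        = fun r : ℕ => (-(q⁻¹ ^ (l+1) * x ^ (l+1) / ((l:ℂ)+1))) * (q⁻¹ ^ (l+1)) ^ r := by
      funext r
      simp only [hF]
      have hpp : (q⁻¹ ^ (r+1)) ^ (l+1) = (q⁻¹ ^ (l+1)) ^ (r+1) := by
        rw [← pow_mul, ← pow_mul, mul_comm]
      rw [mul_pow, hpp, pow_succ']
      ring
    rw [key]
    have hmul := hgeom.mul_left (-(q⁻¹ ^ (l+1) * x ^ (l+1) / ((l:ℂ)+1)))
    convert hmul using 1
    · rfl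
    have hLne : (1:ℂ) - q ^ (l+1) ≠ 0 := sub_ne_zero_of_ne (Ne.symm hqL)
    have hM : q ^ (l+1) - 1 ≠ 0 := sub_ne_zero_of_ne hqL
    rw [inv_pow]
    rw [show (1 - (q ^ (l+1))⁻¹) = (q ^ (l+1) - 1) / q ^ (l+1) from by field_simp, inv_div]
    rw [div_eq_iff (mul_ne_zero hl1 hLne)]
    field_simp
    ring
  -- swap the order of summation
  have hswap : ∑' l : ℕ, x ^ (l + 1) / (((l : ℂ) + 1) * (1 - q ^ (l + 1)))
      = ∑' r : ℕ, Complex.log (1 - q⁻¹ ^ (r + 1) * x) := by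
    have h1 : ∑' l : ℕ, x ^ (l + 1) / (((l : ℂ) + 1) * (1 - q ^ (l + 1)))
        = ∑' (l : ℕ) (r : ℕ), F (r, l) := by
      exact tsum_congr fun l => ((hcol l).tsum_eq).symm
    have h2 : ∑' r : ℕ, Complex.log (1 - q⁻¹ ^ (r + 1) * x)
        = ∑' (r : ℕ) (l : ℕ), F (r, l) := by
      exact tsum_congr fun r => ((hrow r).tsum_eq).symm
    rw [h1, h2]
    exact Summable.tsum_comm' hFsum (fun r => (hrow r).summable) (fun l => (hcol l).summable)
  rw [hswap]
  -- exponential of sum of logs is the product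
  have hS : HasSum (fun r : ℕ => Complex.log (1 - q⁻¹ ^ (r + 1) * x)) (∑' p, F p) :=
    hFsum.hasSum.prod_fiberwise hrow
  have hprod : HasProd (fun r : ℕ => 1 - q⁻¹ ^ (r + 1) * x)
      (Complex.exp (∑' r : ℕ, Complex.log (1 - q⁻¹ ^ (r + 1) * x))) := by
    have hs := hS.summable.hasSum
    apply hs.cexp.congr
    intro _
    congr
    exact funext fun r => Complex.exp_log (hfn r)
  rw [← hprod.tprod_eq]
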